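/- Let μ be a multiplication on A, with symmetric part ρ(x,y) = μ(x,y) + μ(y,x) and skew-symmetric part ψ(x,y) = μ(x,y) − μ(y,x). Then A_μ(x,y,z) = A_μ(z,y,x) holds for all x,y,z ∈ A if and only if ρ(x,ρ(y,z)) − ρ(ρ(x,y),z) = ψ(y,ψ(z,x)) holds for all x,y,z ∈ A; moreover, either condition implies that ψ satisfies the Jacobi identity. -/
import Mathlib


/-- The associator of a bilinear multiplication. -/
def assocMap {K A : Type*} [Field K] [AddCommGroup A] [Module K A]
    (μ : A →ₗ[K] A →ₗ[K] A) (x y z : A) : A :=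
  μ x (μ y z) - μ (μ x y) z

/-- The symmetric part of a bilinear multiplication. -/
def symPart {K A : Type*} [Field K] [AddCommGroup A] [Module K A]
    (μ : A →ₗ[K] A →ₗ[K] A) (x y : A) : A :=
  μ x y + μ y x

/-- The skew-symmetric part of a bilinear multiplication. -/
def skewPart {K A : Type*} [Field K] [AddCommGroup A] [Module K A]
    (μ : A →ₗ[K] A →ₗ[K] A) (x y : A) : A :=
  μ x y - μ y x

/-- `A_μ(x,y,z) = A_μ(z,y,x)` for all `x,y,z` iff
`ρ(x,ρ(y,z)) − ρ(ρ(x,y),z) = ψ(y,ψ(z,x))` for all `x,y,z`; moreover either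
condition implies that `ψ` satisfies the Jacobi identity. -/
theorem tau13_polarization {K A : Type*} [Field K] [CharZero K]
    [AddCommGroup A] [Module K A]
    (μ : A →ₗ[K] A →ₗ[K] A) :
    ((∀ x y z : A, assocMap μ x y z = assocMap μ z y x) ↔
      (∀ x y z : A,
        symPart μ x (symPart μ y z) - symPart μ (symPart μ x y) z =
          skewPart μ y (skewPart μ z x))) ∧
    ((∀ x y z : A, assocMap μ x y z = assocMap μ z y x) →
      (∀ x y z : A,
        skewPart μ x (skewPart μ y z) + skewPart μ y (skewPart μ z x) +
          skewPart μ z (skewPart μ x y) = 0)) ∧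
    ((∀ x y z : A,
        symPart μ x (symPart μ y z) - symPart μ (symPart μ x y) z =
          skewPart μ y (skewPart μ z x)) →
      (∀ x y z : A,
        skewPart μ x (skewPart μ y z) + skewPart μ y (skewPart μ z x) +
          skewPart μ z (skewPart μ x y) = 0)) := by
  have hTS : (∀ x y z : A, assocMap μ x y z = assocMap μ z y x) →
      ∀ x y z : A,
        symPart μ x (symPart μ y z) - symPart μ (symPart μ x y) z =
          skewPart μ y (skewPart μ z x) := by
    intro h x y z
    rw [← sub_eq_zero]
    have key : symPart μ x (symPart μ y z) - symPart μ (symPart μ x y) z -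
        skewPart μ y (skewPart μ z x)
        = (assocMap μ x y z - assocMap μ z y x) + (assocMap μ x z y - assocMap μ y z x)
          + (assocMap μ y x z - assocMap μ z x y) := by
      simp only [assocMap, symPart, skewPart, map_add, map_sub, LinearMap.add_apply,
        LinearMap.sub_apply]
      abel
    rw [key, h x y z, h x z y, h y x z]
    abel
  have hST : (∀ x y z : A,
        symPart μ x (symPart μ y z) - symPart μ (symPart μ x y) z =
          skewPart μ y (skewPart μ z x)) →
      ∀ x y z : A, assocMap μ x y z = assocMap μ z y x := by
    intro h x y z
    have key : (assocMap μ x y z - assocMap μ z y x) + (assocMap μ x y z - assocMap μ z y x)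
        = (symPart μ x (symPart μ z y) - symPart μ (symPart μ x z) y -
            skewPart μ z (skewPart μ y x))
          + (symPart μ y (symPart μ x z) - symPart μ (symPart μ y x) z -
            skewPart μ x (skewPart μ z y)) := by
      simp only [assocMap, symPart, skewPart, map_add, map_sub, LinearMap.add_apply,
        LinearMap.sub_apply]
      abel
    have d1 := sub_eq_zero_of_eq (h x z y)
    have d2 := sub_eq_zero_of_eq (h y x z)
    rw [d1, d2, add_zero] at key
    have h2 : (2 : K) • (assocMap μ x y z - assocMap μ z y x) = 0 := by
      rw [two_smul]; exact key
    have h3 := (smul_eq_zero.mp h2).resolve_left (two_ne_zero (α := K))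
    exact sub_eq_zero.mp h3
  have hTJ : (∀ x y z : A, assocMap μ x y z = assocMap μ z y x) →
      ∀ x y z : A,
        skewPart μ x (skewPart μ y z) + skewPart μ y (skewPart μ z x) +
          skewPart μ z (skewPart μ x y) = 0 := by
    intro h x y z
    have key : skewPart μ x (skewPart μ y z) + skewPart μ y (skewPart μ z x) +
        skewPart μ z (skewPart μ x y)
        = (assocMap μ x y z - assocMap μ z y x) - (assocMap μ x z y - assocMap μ y z x)
          - (assocMap μ y x z - assocMap μ z x y) := by
      simp only [assocMap, skewPart, map_add, map_sub, LinearMap.add_apply,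
        LinearMap.sub_apply]
      abel
    rw [key, h x y z, h x z y, h y x z]
    abel
  exact ⟨⟨hTS, hST⟩, hTJ, fun h => hTJ (hST h)⟩
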